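/- Let n, k, m ∈ ℕ, let g₀ = 1 (with d₀ = 0) and g₁,…,g_m be real polynomials in n variables of degrees at most 2d₁,…,2d_m with dᵢ ≤ k, and let S(g) = { x ∈ ℝ^n : gᵢ(x) ≥ 0 for i = 1,…,m }. Let μ be a positive measure supported on S(g) whose monomial moments up to degree 2k are finite, let f be a real polynomial of degree at most 2k, let λ̲, λ ∈ ℝ with λ̲ ≤ λ, and let G₀,…,G_m be positive semidefinite real symmetric matrices, Gᵢ indexed by ℕ^n_{k−dᵢ}, such that f(x) − λ = Σ_{i=0}^m gᵢ(x) · v_{k−dᵢ}(x)ᵀ Gᵢ v_{k−dᵢ}(x) for all x ∈ ℝ^n, where v_t(x) = (x^α)_{α∈ℕ^n_t}. Let D_k(gμ) be the block-diagonal matrix with blocks M_{k−dᵢ}(gᵢμ), i = 0,…,m. If λ_min(D_k(gμ)) > 0 and ∫(f − λ̲) dμ ≤ λ_min(D_k(gμ)), then Σ_{i=0}^m tr(Gᵢ) ≤ 1. -/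

import Mathlib

open Matrix BigOperators MeasureTheory

/-- The set `ℕ^n_k` of multi-indices `α ∈ ℕ^n` with `|α| = α₁ + ⋯ + αₙ ≤ k`. -/
abbrev MIdx (n k : ℕ) : Type := {α : Fin n → ℕ // ∑ i, α i ≤ k}

noncomputable instance (n k : ℕ) : Fintype (MIdx n k) :=
  Fintype.ofInjective
    (fun a : MIdx n k => fun i : Fin n =>
      (⟨a.1 i, Nat.lt_succ_of_le
        ((Finset.single_le_sum (fun j _ => Nat.zero_le (a.1 j)) (Finset.mem_univ i)).trans
          a.2)⟩ : Fin (k + 1)))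
    (fun a b h => Subtype.ext (funext fun i => congrArg Fin.val (congrFun h i)))

/-- The smallest eigenvalue of a real symmetric matrix, expressed as the infimum of the
Rayleigh quotient over the unit sphere (Courant–Fischer). -/
noncomputable def eigMin {m : Type} [Fintype m] (A : Matrix m m ℝ) : ℝ :=
  ⨅ v : {v : m → ℝ // v ⬝ᵥ v = 1}, v.1 ⬝ᵥ A.mulVec v.1

/-- Evaluation of the polynomial `gᵢ` (given by its coefficients `gc i`, supported on
degrees `≤ 2·dᵢ`) at a point `x ∈ ℝ^n`. -/
noncomputable def geval (n : ℕ) {m : ℕ} (d : Fin (m + 1) → ℕ)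
    (gc : Fin (m + 1) → (Fin n → ℕ) → ℝ) (i : Fin (m + 1)) (x : Fin n → ℝ) : ℝ :=
  ∑ ζ : MIdx n (2 * d i), gc i ζ.1 * ∏ j, x j ^ ζ.1 j

/-- The block-diagonal moment/localizing matrix `D_k(gμ)` with blocks
`M_{k−dᵢ}(gᵢμ)`, `i = 0,…,m`: entry at `((i,α),(i,β))` is `∫ gᵢ(x)·x^{α+β} dμ`. -/
noncomputable def DkMat (n k m : ℕ) (d : Fin (m + 1) → ℕ)
    (gc : Fin (m + 1) → (Fin n → ℕ) → ℝ) (μ : Measure (Fin n → ℝ)) :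
    Matrix ((i : Fin (m + 1)) × MIdx n (k - d i))
      ((i : Fin (m + 1)) × MIdx n (k - d i)) ℝ :=
  Matrix.of fun p q =>
    if p.1 = q.1 then
      ∫ x, geval n d gc p.1 x * ∏ j, x j ^ (p.2.1 j + q.2.1 j) ∂μ
    else 0

lemma my_dot_self_nonneg {ι : Type} [Fintype ι] (v : ι → ℝ) : 0 ≤ v ⬝ᵥ v :=
  Finset.sum_nonneg fun _ _ => mul_self_nonneg _

lemma eigMin_le {ι : Type} [Fintype ι] (A : Matrix ι ι ℝ) (v : ι → ℝ) (hv : v ⬝ᵥ v = 1) :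
    eigMin A ≤ v ⬝ᵥ A.mulVec v := by
  have hb : ∀ u : ι → ℝ, u ⬝ᵥ u = 1 → -(∑ i, ∑ j, |A i j|) ≤ u ⬝ᵥ A.mulVec u := by
    intro u hu
    have habs : ∀ i, |u i| ≤ 1 := by
      intro i
      rw [← sq_le_one_iff_abs_le_one, sq]
      calc u i * u i ≤ ∑ j, u j * u j :=
            Finset.single_le_sum (fun j _ => mul_self_nonneg (u j)) (Finset.mem_univ i)
        _ = 1 := hu
    have h1 : |u ⬝ᵥ A.mulVec u| ≤ ∑ i, ∑ j, |A i j| := by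
      calc |u ⬝ᵥ A.mulVec u| ≤ ∑ i, |u i * (A.mulVec u) i| :=
            Finset.abs_sum_le_sum_abs _ _
        _ ≤ ∑ i, ∑ j, |A i j| := by
            apply Finset.sum_le_sum
            intro i _
            rw [abs_mul]
            calc |u i| * |(A.mulVec u) i| ≤ 1 * |(A.mulVec u) i| :=
                  mul_le_mul_of_nonneg_right (habs i) (abs_nonneg _)
              _ = |∑ j, A i j * u j| := by rw [one_mul]; rfl
              _ ≤ ∑ j, |A i j * u j| := Finset.abs_sum_le_sum_abs _ _
              _ ≤ ∑ j, |A i j| := by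
                  apply Finset.sum_le_sum
                  intro j _
                  rw [abs_mul]
                  calc |A i j| * |u j| ≤ |A i j| * 1 :=
                        mul_le_mul_of_nonneg_left (habs j) (abs_nonneg _)
                    _ = |A i j| := mul_one _
    linarith [neg_abs_le (u ⬝ᵥ A.mulVec u)]
  apply ciInf_le _ (⟨v, hv⟩ : {v : ι → ℝ // v ⬝ᵥ v = 1})
  refine ⟨-(∑ i, ∑ j, |A i j|), ?_⟩
  rintro x ⟨⟨u, hu⟩, rfl⟩
  exact hb u hu

lemma eigMin_quad {ι : Type} [Fintype ι] (A : Matrix ι ι ℝ) (w : ι → ℝ) :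
    eigMin A * (w ⬝ᵥ w) ≤ w ⬝ᵥ A.mulVec w := by
  rcases eq_or_ne w 0 with rfl | hw
  · simp [Matrix.mulVec, dotProduct]
  · have h1 : 0 < w ⬝ᵥ w := by
      rcases (my_dot_self_nonneg w).lt_or_eq with h | h
      · exact h
      · exfalso; apply hw
        funext i
        have := Finset.sum_eq_zero_iff_of_nonneg (fun j (_ : j ∈ Finset.univ) =>
          mul_self_nonneg (w j)) |>.mp h.symm i (Finset.mem_univ i)
        exact mul_self_eq_zero.mp this
    set t := Real.sqrt (w ⬝ᵥ w) with htdef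
    have ht : 0 < t := Real.sqrt_pos.2 h1
    have ht2 : t * t = w ⬝ᵥ w := Real.mul_self_sqrt h1.le
    have hu : (t⁻¹ • w) ⬝ᵥ (t⁻¹ • w) = 1 := by
      rw [smul_dotProduct, dotProduct_smul, smul_eq_mul, smul_eq_mul, ← ht2]
      field_simp
    have h2 := eigMin_le A _ hu
    rw [smul_dotProduct, Matrix.mulVec_smul, dotProduct_smul, smul_eq_mul, smul_eq_mul] at h2
    have h3 : eigMin A * (t * t) ≤ t * (t * (t⁻¹ * (t⁻¹ * (w ⬝ᵥ A.mulVec w)))) := by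
      nlinarith [h2, ht]
    rw [← ht2]
    calc eigMin A * (t * t) ≤ t * (t * (t⁻¹ * (t⁻¹ * (w ⬝ᵥ A.mulVec w)))) := h3
      _ = w ⬝ᵥ A.mulVec w := by field_simp

lemma trace_psd {ι : Type} [Fintype ι] [DecidableEq ι] {G N : Matrix ι ι ℝ}
    (hG : G.PosSemidef) (hN : ∀ w : ι → ℝ, 0 ≤ w ⬝ᵥ N.mulVec w) : 0 ≤ (G * N).trace := by
  obtain ⟨B, rfl⟩ := (by open scoped MatrixOrder in exact CStarAlgebra.nonneg_iff_eq_star_mul_self.mp hG.nonneg : ∃ B : Matrix ι ι ℝ, G = Bᴴ * B)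
  rw [Matrix.mul_assoc, Matrix.trace_mul_comm, Matrix.trace]
  apply Finset.sum_nonneg
  intro j _
  have heq : ((B * N) * Bᴴ) j j = (fun a => B j a) ⬝ᵥ N.mulVec (fun a => B j a) := by
    simp only [Matrix.mul_apply, Matrix.conjTranspose_apply, star_trivial, dotProduct,
      Matrix.mulVec, Finset.sum_mul, Finset.mul_sum]
    rw [Finset.sum_comm]
    exact Finset.sum_congr rfl fun a _ => Finset.sum_congr rfl fun b _ => by ring
  simp only [Matrix.diag_apply] at *
  rw [heq]
  exact hN _

lemma block_quad (n k m : ℕ) (d : Fin (m + 1) → ℕ)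
    (gc : Fin (m + 1) → (Fin n → ℕ) → ℝ) (μ : Measure (Fin n → ℝ)) (i : Fin (m + 1))
    (w : MIdx n (k - d i) → ℝ) :
    eigMin (DkMat n k m d gc μ) * (w ⬝ᵥ w) ≤
      w ⬝ᵥ (Matrix.of fun α β : MIdx n (k - d i) =>
        ∫ x, geval n d gc i x * ∏ j, x j ^ (α.1 j + β.1 j) ∂μ).mulVec w := by
  classical
  set W : ((j : Fin (m + 1)) × MIdx n (k - d j)) → ℝ :=
    fun p => if h : p.1 = i then w (h ▸ p.2) else 0 with hWdef
  have hWi : ∀ α : MIdx n (k - d i), W ⟨i, α⟩ = w α := fun α => dif_pos rfl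
  have hWj : ∀ (j) (h : j ≠ i) (α : MIdx n (k - d j)), W ⟨j, α⟩ = 0 := fun j h α => dif_neg h
  have h1 : W ⬝ᵥ W = w ⬝ᵥ w := by
    rw [dotProduct, dotProduct, ← Finset.univ_sigma_univ, Finset.sum_sigma]
    rw [Finset.sum_eq_single i]
    · exact Finset.sum_congr rfl fun α _ => by rw [hWi]
    · intro j _ hj
      exact Finset.sum_eq_zero fun α _ => by rw [hWj j hj]; ring
    · intro h; exact absurd (Finset.mem_univ i) h
  have h2 : W ⬝ᵥ (DkMat n k m d gc μ).mulVec W =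
      w ⬝ᵥ (Matrix.of fun α β : MIdx n (k - d i) =>
        ∫ x, geval n d gc i x * ∏ j, x j ^ (α.1 j + β.1 j) ∂μ).mulVec w := by
    rw [dotProduct, dotProduct, ← Finset.univ_sigma_univ, Finset.sum_sigma]
    rw [Finset.sum_eq_single i]
    · apply Finset.sum_congr rfl
      intro α _
      rw [hWi]
      congr 1
      show (DkMat n k m d gc μ).mulVec W ⟨i, α⟩ = _
      rw [Matrix.mulVec, dotProduct, Matrix.mulVec, dotProduct,
        ← Finset.univ_sigma_univ, Finset.sum_sigma]
      rw [Finset.sum_eq_single i]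
      · apply Finset.sum_congr rfl
        intro β _
        rw [hWi]
        congr 1
        show (if i = i then _ else (0:ℝ)) = _
        rw [if_pos rfl]
        rfl
      · intro j _ hj
        exact Finset.sum_eq_zero fun β _ => by rw [hWj j hj]; ring
      · intro h; exact absurd (Finset.mem_univ i) h
    · intro j _ hj
      exact Finset.sum_eq_zero fun α _ => by rw [hWj j hj]; ring
    · intro h; exact absurd (Finset.mem_univ i) h
  calc eigMin (DkMat n k m d gc μ) * (w ⬝ᵥ w)
      = eigMin (DkMat n k m d gc μ) * (W ⬝ᵥ W) := by rw [h1]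
    _ ≤ W ⬝ᵥ (DkMat n k m d gc μ).mulVec W := eigMin_quad _ _
    _ = _ := h2

/-- If `f − λ = Σᵢ gᵢ · v_{k−dᵢ}ᵀ Gᵢ v_{k−dᵢ}` with each `Gᵢ ⪰ 0`,
`λ̲ ≤ λ`, `μ` supported on `S(g)`, `λ_min(D_k(gμ)) > 0` and
`∫ (f − λ̲) dμ ≤ λ_min(D_k(gμ))`, then `Σᵢ tr(Gᵢ) ≤ 1`. -/
theorem stmt10 (n k m : ℕ) (d : Fin (m + 1) → ℕ) (hd0 : d 0 = 0) (hdk : ∀ i, d i ≤ k)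
    (gc : Fin (m + 1) → (Fin n → ℕ) → ℝ)
    (hg0 : gc 0 = fun ζ => if ζ = 0 then 1 else 0)
    (hsupp : ∀ (i : Fin (m + 1)) (ζ : Fin n → ℕ), ¬ (∑ j, ζ j ≤ 2 * d i) → gc i ζ = 0)
    (μ : Measure (Fin n → ℝ))
    (hμsupp : ∀ᵐ x ∂μ, ∀ i : Fin (m + 1), 0 ≤ geval n d gc i x)
    (hmom : ∀ γ : Fin n → ℕ, (∑ i, γ i) ≤ 2 * k →
      Integrable (fun x => ∏ i, x i ^ γ i) μ)
    (f : MIdx n (2 * k) → ℝ) (lamL lam : ℝ) (hll : lamL ≤ lam)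
    (G : (i : Fin (m + 1)) → Matrix (MIdx n (k - d i)) (MIdx n (k - d i)) ℝ)
    (hG : ∀ i, (G i).PosSemidef)
    (hrep : ∀ x : Fin n → ℝ,
      (∑ γ : MIdx n (2 * k), f γ * ∏ i, x i ^ γ.1 i) - lam
        = ∑ i : Fin (m + 1), geval n d gc i x *
            ((fun α : MIdx n (k - d i) => ∏ j, x j ^ α.1 j) ⬝ᵥ
              (G i).mulVec (fun α : MIdx n (k - d i) => ∏ j, x j ^ α.1 j)))
    (hpos : 0 < eigMin (DkMat n k m d gc μ))
    (hint : (∫ x, ((∑ γ : MIdx n (2 * k), f γ * ∏ i, x i ^ γ.1 i) - lamL) ∂μ)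
      ≤ eigMin (DkMat n k m d gc μ)) :
    ∑ i : Fin (m + 1), (G i).trace ≤ 1 := by
  classical
  set c := eigMin (DkMat n k m d gc μ) with hc
  set M : (i : Fin (m + 1)) → Matrix (MIdx n (k - d i)) (MIdx n (k - d i)) ℝ :=
    fun i => Matrix.of fun α β => ∫ x, geval n d gc i x * ∏ j, x j ^ (α.1 j + β.1 j) ∂μ
    with hM
  -- integrability of gᵢ · monomial
  have hgmono : ∀ (i : Fin (m + 1)) (α β : MIdx n (k - d i)),
      Integrable (fun x => geval n d gc i x * ∏ j, x j ^ (α.1 j + β.1 j)) μ := by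
    intro i α β
    have heq : (fun x : Fin n → ℝ => geval n d gc i x * ∏ j, x j ^ (α.1 j + β.1 j)) =
        fun x => ∑ ζ : MIdx n (2 * d i), gc i ζ.1 * ∏ j, x j ^ (ζ.1 j + (α.1 j + β.1 j)) := by
      funext x
      rw [geval, Finset.sum_mul]
      apply Finset.sum_congr rfl
      intro ζ _
      rw [mul_assoc, ← Finset.prod_mul_distrib]
      congr 1
      exact Finset.prod_congr rfl fun j _ => (pow_add _ _ _).symm
    rw [heq]
    apply integrable_finset_sum
    intro ζ _
    apply Integrable.const_mul
    apply hmom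
    have h1 := ζ.2; have h2 := α.2; have h3 := β.2; have h4 := hdk i
    calc ∑ j, (ζ.1 j + (α.1 j + β.1 j))
        = (∑ j, ζ.1 j) + ((∑ j, α.1 j) + (∑ j, β.1 j)) := by
          rw [Finset.sum_add_distrib, Finset.sum_add_distrib]
      _ ≤ 2 * k := by omega
  have hμfin : IsFiniteMeasure μ := by
    have h1 : Integrable (fun _ : Fin n → ℝ => (1 : ℝ)) μ := by
      simpa using hmom 0 (by simp)
    rcases integrable_const_iff.mp h1 with h | h
    · exact absurd h one_ne_zero
    · exact h
  have hF : Integrable (fun x => ∑ γ : MIdx n (2 * k), f γ * ∏ i, x i ^ γ.1 i) μ :=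
    integrable_finset_sum _ fun γ _ => (hmom γ.1 γ.2).const_mul _
  -- pointwise expansion of gᵢ · (vᵀ Gᵢ v)
  have hqp : ∀ (i : Fin (m + 1)) (x : Fin n → ℝ), geval n d gc i x *
      ((fun α : MIdx n (k - d i) => ∏ j, x j ^ α.1 j) ⬝ᵥ
        (G i).mulVec (fun α : MIdx n (k - d i) => ∏ j, x j ^ α.1 j)) =
      ∑ α : MIdx n (k - d i), ∑ β : MIdx n (k - d i),
        G i α β * (geval n d gc i x * ∏ j, x j ^ (α.1 j + β.1 j)) := by
    intro i x
    rw [dotProduct, Finset.mul_sum]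
    apply Finset.sum_congr rfl
    intro α _
    rw [Matrix.mulVec, dotProduct, Finset.mul_sum, Finset.mul_sum]
    apply Finset.sum_congr rfl
    intro β _
    have hprod : ∏ j, x j ^ (α.1 j + β.1 j) = (∏ j, x j ^ α.1 j) * ∏ j, x j ^ β.1 j := by
      rw [← Finset.prod_mul_distrib]
      exact Finset.prod_congr rfl fun j _ => pow_add _ _ _
    rw [hprod]; ring
  have hq : ∀ i, Integrable (fun x => geval n d gc i x *
      ((fun α : MIdx n (k - d i) => ∏ j, x j ^ α.1 j) ⬝ᵥ
        (G i).mulVec (fun α : MIdx n (k - d i) => ∏ j, x j ^ α.1 j))) μ := by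
    intro i
    simp only [hqp]
    apply integrable_finset_sum; intro α _
    apply integrable_finset_sum; intro β _
    exact (hgmono i α β).const_mul _
  -- key integral identity
  have key : (∫ x, ((∑ γ : MIdx n (2 * k), f γ * ∏ i, x i ^ γ.1 i) - lam) ∂μ)
      = ∑ i : Fin (m + 1), ((G i) * (M i)).trace := by
    have h1 : (fun x => (∑ γ : MIdx n (2 * k), f γ * ∏ i, x i ^ γ.1 i) - lam)
        = fun x => ∑ i : Fin (m + 1), geval n d gc i x *
            ((fun α : MIdx n (k - d i) => ∏ j, x j ^ α.1 j) ⬝ᵥ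
              (G i).mulVec (fun α : MIdx n (k - d i) => ∏ j, x j ^ α.1 j)) :=
      funext hrep
    rw [h1, integral_finset_sum _ fun i _ => hq i]
    apply Finset.sum_congr rfl
    intro i _
    have h2 : (∫ x, geval n d gc i x *
        ((fun α : MIdx n (k - d i) => ∏ j, x j ^ α.1 j) ⬝ᵥ
          (G i).mulVec (fun α : MIdx n (k - d i) => ∏ j, x j ^ α.1 j)) ∂μ)
        = ∑ α : MIdx n (k - d i), ∑ β : MIdx n (k - d i), G i α β * M i α β := by
      simp only [hqp]
      refine (integral_finset_sum _ fun α _ =>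
        integrable_finset_sum _ fun β _ => (hgmono i α β).const_mul _).trans ?_
      apply Finset.sum_congr rfl; intro α _
      refine (integral_finset_sum _ fun β _ => (hgmono i α β).const_mul _).trans ?_
      apply Finset.sum_congr rfl; intro β _
      exact MeasureTheory.integral_const_mul _ _
    rw [h2, Matrix.trace]
    simp only [Matrix.diag_apply, Matrix.mul_apply]
    apply Finset.sum_congr rfl; intro α _
    apply Finset.sum_congr rfl; intro β _
    congr 1
    show M i α β = M i β α
    simp only [hM, Matrix.of_apply]
    congr 1
    funext x
    congr 1
    exact Finset.prod_congr rfl fun j _ => by rw [Nat.add_comm]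
  -- per-block trace inequality
  have h1 : ∀ i : Fin (m + 1), c * (G i).trace ≤ ((G i) * (M i)).trace := by
    intro i
    have hN : ∀ w : MIdx n (k - d i) → ℝ,
        0 ≤ w ⬝ᵥ (M i - c • (1 : Matrix (MIdx n (k - d i)) (MIdx n (k - d i)) ℝ)).mulVec w := by
      intro w
      rw [Matrix.sub_mulVec, dotProduct_sub, Matrix.smul_mulVec, Matrix.one_mulVec,
        dotProduct_smul, smul_eq_mul]
      have hbq : c * (w ⬝ᵥ w) ≤ w ⬝ᵥ (M i).mulVec w := block_quad n k m d gc μ i w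
      linarith
    have h2 := trace_psd (hG i) hN
    rw [Matrix.mul_sub, Matrix.trace_sub] at h2
    have h3 : ((G i) * (c • (1 : Matrix (MIdx n (k - d i)) (MIdx n (k - d i)) ℝ))).trace
        = c * (G i).trace := by
      rw [Matrix.mul_smul, Matrix.mul_one, Matrix.trace_smul, smul_eq_mul]
    linarith
  have hsum : c * ∑ i : Fin (m + 1), (G i).trace ≤ ∑ i : Fin (m + 1), ((G i) * (M i)).trace := by
    rw [Finset.mul_sum]
    exact Finset.sum_le_sum fun i _ => h1 i
  have h3 : (∫ x, ((∑ γ : MIdx n (2 * k), f γ * ∏ i, x i ^ γ.1 i) - lam) ∂μ)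
      ≤ (∫ x, ((∑ γ : MIdx n (2 * k), f γ * ∏ i, x i ^ γ.1 i) - lamL) ∂μ) := by
    apply integral_mono (hF.sub (integrable_const lam)) (hF.sub (integrable_const lamL))
    intro x
    simp only [Pi.sub_apply]
    linarith
  have hfinal : c * ∑ i : Fin (m + 1), (G i).trace ≤ c := by
    calc c * ∑ i : Fin (m + 1), (G i).trace
        ≤ ∑ i : Fin (m + 1), ((G i) * (M i)).trace := hsum
      _ = ∫ x, ((∑ γ : MIdx n (2 * k), f γ * ∏ i, x i ^ γ.1 i) - lam) ∂μ := key.symm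
      _ ≤ ∫ x, ((∑ γ : MIdx n (2 * k), f γ * ∏ i, x i ^ γ.1 i) - lamL) ∂μ := h3
      _ ≤ c := hint
  nlinarith [hpos, hfinal]
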